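/- Let $R$ be a one-dimensional local Cohen–Macaulay ring with canonical module $\omega_R$, and let $I$ be an ideal with $\operatorname{ht} I > 0$. If $I^i I^{-n} = a^i I^{-n}$ for some $a \in I$ and some positive integers $i$ and $n$, and $I^{r-1} \cong \omega_R$ for some positive integer $r$, then $I^{r+n} = a I^{r+n-1}$. -/

import Mathlib

/-- `J` is a reduction of `I`. -/
def Ideal.IsReduction {R : Type*} [CommRing R] (J I : Ideal R) : Prop :=
  J ≤ I ∧ ∃ n : ℕ, I ^ (n + 1) = J * I ^ n

/-- The reduction number of `I` with respect to `J`. -/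
noncomputable def Ideal.reductionNumber {R : Type*} [CommRing R] (J I : Ideal R) : ℕ :=
  sInf {n : ℕ | I ^ (n + 1) = J * I ^ n}

/-- `J` is a minimal reduction of `I`. -/
def Ideal.IsMinimalReduction {R : Type*} [CommRing R] (J I : Ideal R) : Prop :=
  J.IsReduction I ∧ ∀ K : Ideal R, K.IsReduction I → K ≤ J → K = J

/-- The core of `I`: the intersection of all reductions of `I`. -/
noncomputable def Ideal.core {R : Type*} [CommRing R] (I : Ideal R) : Ideal R :=
  sInf {J : Ideal R | J.IsReduction I}

/-- The reduction number `r(I)`: the minimum of `r_J(I)` over minimal reductions `J`. -/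
noncomputable def Ideal.redNum {R : Type*} [CommRing R] (I : Ideal R) : ℕ :=
  sInf {n : ℕ | ∃ J : Ideal R, J.IsMinimalReduction I ∧ J.reductionNumber I = n}

/-- The height of an ideal: the infimum of the heights of primes containing it. -/
noncomputable def idealHeight {R : Type*} [CommRing R] (I : Ideal R) : ℕ∞ :=
  ⨅ p ∈ {p : PrimeSpectrum R | I ≤ p.asIdeal}, Order.height p

/-- A regular sequence in `R`. -/
def IsRegularSeq (R : Type*) [CommRing R] (rs : List R) : Prop :=
  Ideal.span {x | x ∈ rs} ≠ ⊤ ∧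
    ∀ (i : ℕ) (h : i < rs.length) (x : R),
      rs.get ⟨i, h⟩ * x ∈ Ideal.span {y | y ∈ rs.take i} →
        x ∈ Ideal.span {y | y ∈ rs.take i}

/-- A Cohen–Macaulay local ring: a local ring admitting a regular sequence of nonunits
whose length equals the Krull dimension. -/
def IsCohenMacaulayLocalRing (R : Type*) [CommRing R] : Prop :=
  IsLocalRing R ∧ ∃ rs : List R, (∀ r ∈ rs, ¬ IsUnit r) ∧ IsRegularSeq R rs ∧
    (rs.length : WithBot ℕ∞) = ringKrullDim R

/-- A Cohen–Macaulay ring: all localizations at maximal ideals are Cohen–Macaulay local. -/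
def IsCohenMacaulayRing (A : Type*) [CommRing A] : Prop :=
  ∀ (p : Ideal A) (hp : p.IsPrime), p.IsMaximal →
    IsCohenMacaulayLocalRing (Localization (@Ideal.primeCompl A _ p hp))

/-- The associated graded ring `gr_I(R) = R[It]/I·R[It]`. -/
noncomputable def assocGradedRing {R : Type*} [CommRing R] (I : Ideal R) :=
  (reesAlgebra I) ⧸ (Ideal.map (algebraMap R (reesAlgebra I)) I)

noncomputable instance {R : Type*} [CommRing R] (I : Ideal R) :
    CommRing (assocGradedRing I) :=
  inferInstanceAs (CommRing ((reesAlgebra I) ⧸ (Ideal.map (algebraMap R (reesAlgebra I)) I)))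

/-- The image of an ideal in the total ring of fractions. -/
noncomputable def toFrac {R : Type*} [CommRing R] (I : Ideal R) :
    Submodule R (FractionRing R) :=
  Submodule.map (Algebra.linearMap R (FractionRing R)) I

/-- The inverse fractional ideal `I^{-n} = R :_{Q(R)} I^n`. -/
noncomputable def invPow {R : Type*} [CommRing R] (I : Ideal R) (n : ℕ) :
    Submodule R (FractionRing R) :=
  (1 : Submodule R (FractionRing R)) / toFrac (I ^ n)

/-- `ω` is a canonical ideal of the one-dimensional Cohen–Macaulay local ring `R`:
a regular fractional ideal such that double-dualizing into `ω` fixes every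
regular fractional ideal. -/
def IsCanonicalIdeal (R : Type*) [CommRing R] (ω : Submodule R (FractionRing R)) : Prop :=
  ω.FG ∧ (∃ x ∈ ω, IsUnit x) ∧
    ∀ F : Submodule R (FractionRing R), F.FG → (∃ x ∈ F, IsUnit x) → ω / (ω / F) = F


open Pointwise

section myGeneric
variable {R A : Type*} [CommRing R] [CommRing A] [Algebra R A]

lemma my_div_one (F : Submodule R A) : F / 1 = F := by
  ext x
  rw [Submodule.mem_div_iff_forall_mul_mem]
  constructor
  · intro h; simpa using h 1 (Submodule.one_le.1 le_rfl)
  · intro hx y hy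
    obtain ⟨r, rfl⟩ := Submodule.mem_one.1 hy
    rw [mul_comm, ← Algebra.smul_def]
    exact F.smul_mem r hx

lemma my_div_mul (F G H : Submodule R A) : F / (G * H) = F / G / H := by
  apply le_antisymm
  · rw [Submodule.le_div_iff_mul_le, Submodule.le_div_iff_mul_le, mul_assoc, mul_comm H G]
    exact Submodule.le_div_iff_mul_le.1 le_rfl
  · rw [Submodule.le_div_iff_mul_le, mul_comm G H, ← mul_assoc]
    exact Submodule.le_div_iff_mul_le.1 (Submodule.le_div_iff_mul_le.1 le_rfl)

lemma my_mem_usmul (u : A) {S : Submodule R A} {x : A} :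
    x ∈ u • S ↔ ∃ y ∈ S, u * y = x := by
  constructor
  · intro h
    obtain ⟨y, hy, hyx⟩ := Set.mem_smul_set.1 h
    exact ⟨y, hy, by rwa [smul_eq_mul] at hyx⟩
  · rintro ⟨y, hy, rfl⟩
    rw [← smul_eq_mul]
    exact Submodule.smul_mem_pointwise_smul y u S hy

lemma my_usmul_mem {S : Submodule R A} {x u : A} (h : x ∈ S) : u * x ∈ u • S :=
  my_mem_usmul u |>.2 ⟨x, h, rfl⟩

lemma my_smul_div (u : Aˣ) (F G : Submodule R A) :
    ((u : A) • F) / G = (u : A) • (F / G) := by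
  ext x
  rw [my_mem_usmul, Submodule.mem_div_iff_forall_mul_mem]
  constructor
  · intro h
    refine ⟨(↑u⁻¹ : A) * x, ?_, by rw [← mul_assoc, Units.mul_inv, one_mul]⟩
    rw [Submodule.mem_div_iff_forall_mul_mem]
    intro y hy
    obtain ⟨z, hz, hzx⟩ := my_mem_usmul (u : A) |>.1 (h y hy)
    have : (↑u⁻¹ : A) * x * y = (↑u⁻¹ : A) * (x * y) := by ring
    rw [this, ← hzx, ← mul_assoc, Units.inv_mul, one_mul]
    exact hz
  · rintro ⟨w, hw, rfl⟩ y hy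
    have : (u : A) * w * y = (u : A) * (w * y) := by ring
    rw [this]
    exact my_usmul_mem (Submodule.mem_div_iff_forall_mul_mem.1 hw y hy)

lemma my_div_smul (u : Aˣ) (F G : Submodule R A) :
    F / ((u : A) • G) = (↑u⁻¹ : A) • (F / G) := by
  ext x
  rw [my_mem_usmul, Submodule.mem_div_iff_forall_mul_mem]
  constructor
  · intro h
    refine ⟨(u : A) * x, ?_, by rw [← mul_assoc, Units.inv_mul, one_mul]⟩
    rw [Submodule.mem_div_iff_forall_mul_mem]
    intro z hz
    have : (u : A) * x * z = x * ((u : A) * z) := by ring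
    rw [this]
    exact h _ (my_usmul_mem hz)
  · rintro ⟨w, hw, rfl⟩ y hy
    obtain ⟨z, hz, rfl⟩ := my_mem_usmul (u : A) |>.1 hy
    have : (↑u⁻¹ : A) * w * ((u : A) * z) = ((↑u⁻¹ : A) * (u : A)) * (w * z) := by ring
    rw [this, Units.inv_mul, one_mul]
    exact Submodule.mem_div_iff_forall_mul_mem.1 hw z hz

lemma my_smul_le_smul (u : A) {S T : Submodule R A} (h : S ≤ T) : u • S ≤ u • T :=
  Submodule.map_mono h

lemma my_usmul_cancel (u : Aˣ) (S : Submodule R A) : (u : A) • ((↑u⁻¹ : A) • S) = S := by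
  rw [smul_smul, Units.mul_inv, one_smul]

lemma my_usmul_cancel' (u : Aˣ) (S : Submodule R A) : (↑u⁻¹ : A) • ((u : A) • S) = S := by
  rw [smul_smul, Units.inv_mul, one_smul]

lemma my_smul_eq_map (u : A) (S : Submodule R A) :
    u • S = Submodule.map (LinearMap.mul R A u) S := by
  ext x
  constructor
  · intro h
    obtain ⟨y, hy, hyx⟩ := Set.mem_smul_set.1 h
    exact ⟨y, hy, hyx⟩
  · rintro ⟨y, hy, rfl⟩
    exact Set.smul_mem_smul_set hy

lemma my_fg_smul (u : A) (S : Submodule R A) (h : S.FG) : (u • S).FG := by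
  rw [my_smul_eq_map]
  exact h.map _

end myGeneric

section myFrac
variable {R : Type*} [CommRing R]
local notation "QR" => FractionRing R

lemma toFrac_mul (I J : Ideal R) : toFrac (I * J) = toFrac I * toFrac J := by
  exact Submodule.map_mul I J (Algebra.ofId R QR)

lemma mem_toFrac {I : Ideal R} {x : R} (hx : x ∈ I) : algebraMap R QR x ∈ toFrac I :=
  Submodule.mem_map_of_mem hx

lemma toFrac_le_one (I : Ideal R) : toFrac I ≤ 1 := by
  rintro x ⟨y, -, rfl⟩
  exact Submodule.mem_one.2 ⟨y, rfl⟩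

lemma mem_toFrac_iff {I : Ideal R} {x : R} : algebraMap R QR x ∈ toFrac I ↔ x ∈ I := by
  refine ⟨fun h => ?_, mem_toFrac⟩
  obtain ⟨y, hy, hxy⟩ := h
  rwa [← IsFractionRing.injective R QR hxy]

lemma toFrac_inj {I J : Ideal R} (h : toFrac I = toFrac J) : I = J := by
  ext x
  constructor <;> intro hx
  · exact mem_toFrac_iff.1 (h ▸ mem_toFrac hx)
  · exact mem_toFrac_iff.1 (h.symm ▸ mem_toFrac hx)

lemma toFrac_span_singleton (t : R) :
    toFrac (Ideal.span {t}) = Submodule.span R {algebraMap R QR t} := by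
  rw [toFrac, Ideal.span, Submodule.map_span, Set.image_singleton]
  rfl

lemma one_mem_invPow (I : Ideal R) (k : ℕ) : (1 : QR) ∈ invPow I k := by
  rw [invPow, Submodule.mem_div_iff_forall_mul_mem]
  intro y hy
  rw [one_mul]
  exact toFrac_le_one _ hy

lemma my_fg_of_le_one [IsNoetherianRing R] (S : Submodule R QR) (h : S ≤ 1) : S.FG := by
  have h1 : S ≤ LinearMap.range (Algebra.linearMap R QR) := by
    rwa [← Submodule.one_eq_range]
  have h2 : S = Submodule.map (Algebra.linearMap R QR)
      (Submodule.comap (Algebra.linearMap R QR) S) := by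
    rw [Submodule.map_comap_eq]
    exact (inf_eq_right.mpr h1).symm
  rw [h2]
  exact (IsNoetherian.noetherian _).map _

lemma my_invPow_fg [IsNoetherianRing R] (I : Ideal R) (k : ℕ) (b : R)
    (hbI : b ∈ I) (hb : IsUnit (algebraMap R QR b)) : (invPow I k).FG := by
  set u : (QR)ˣ := hb.unit ^ k with hudef
  have hu : (u : QR) = algebraMap R QR (b ^ k) := by
    rw [hudef, Units.val_pow_eq_pow_val, hb.unit_spec, map_pow]
  have hle : (↑u : QR) • invPow I k ≤ 1 := by
    intro z hz
    obtain ⟨y, hy, rfl⟩ := (my_mem_usmul _).1 hz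
    have hmem : y * algebraMap R QR (b ^ k) ∈ (1 : Submodule R QR) :=
      Submodule.mem_div_iff_forall_mul_mem.1 hy _ (mem_toFrac (Ideal.pow_mem_pow hbI k))
    rwa [hu, mul_comm]
  have hfg := my_fg_of_le_one _ hle
  have h2 := my_fg_smul (↑u⁻¹ : QR) _ hfg
  rwa [my_usmul_cancel'] at h2

lemma my_iso_smul (F G : Submodule R QR) (t0 : R) (ht0 : algebraMap R QR t0 ∈ F)
    (htu : IsUnit (algebraMap R QR t0)) (hG : ∃ x ∈ G, IsUnit x)
    (e : F ≃ₗ[R] G) : ∃ c : QR, IsUnit c ∧ G = c • F := by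
  set t : F := ⟨algebraMap R QR t0, ht0⟩ with ht
  have swap : ∀ (z0 w0 : R) (z w : F), (z : QR) = algebraMap R QR z0 →
      (w : QR) = algebraMap R QR w0 → (e z : QR) * (w : QR) = (z : QR) * (e w : QR) := by
    intro z0 w0 z w hz hw
    have h1 : w0 • z = z0 • w := by
      apply Subtype.ext
      show w0 • (z : QR) = z0 • (w : QR)
      rw [hz, hw, Algebra.smul_def, Algebra.smul_def, ← map_mul, ← map_mul, mul_comm]
    have h2 : w0 • (e z : QR) = z0 • (e w : QR) := by
      show ((w0 • e z : G) : QR) = ((z0 • e w : G) : QR)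
      rw [← map_smul, ← map_smul, h1]
    calc (e z : QR) * (w : QR) = w0 • (e z : QR) := by
          rw [hw, Algebra.smul_def]; ring
      _ = z0 • (e w : QR) := h2
      _ = (z : QR) * (e w : QR) := by rw [hz, Algebra.smul_def]
  have step1 : ∀ x : F, (e x : QR) * algebraMap R QR t0 = (x : QR) * (e t : QR) := by
    intro x
    obtain ⟨⟨u, s⟩, hs⟩ := IsLocalization.surj (nonZeroDivisors R) (x : QR)
    simp only at hs
    have hsu : IsUnit (algebraMap R QR (s : R)) := IsLocalization.map_units QR s
    apply hsu.mul_left_cancel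
    have hx'q : (((s : R) • x : F) : QR) = algebraMap R QR u := by
      show (s : R) • (x : QR) = _
      rw [Algebra.smul_def, mul_comm, hs]
    have hex' : ((e ((s : R) • x) : G) : QR) = algebraMap R QR s * (e x : QR) := by
      rw [map_smul]
      show (s : R) • (e x : QR) = _
      rw [Algebra.smul_def]
    calc algebraMap R QR s * ((e x : QR) * algebraMap R QR t0)
        = ((e ((s : R) • x) : G) : QR) * algebraMap R QR t0 := by rw [hex']; ring
      _ = ((((s : R) • x : F) : QR)) * (e t : QR) := by
          rw [show algebraMap R QR t0 = (t : QR) from rfl]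
          exact swap u t0 _ t hx'q rfl
      _ = algebraMap R QR s * ((x : QR) * (e t : QR)) := by
          rw [show ((((s : R) • x : F) : QR)) = (s : R) • (x : QR) from rfl, Algebra.smul_def]
          ring
  obtain ⟨tu, htu'⟩ := htu
  set c : QR := (e t : QR) * (↑tu⁻¹ : QR) with hc
  have step2 : ∀ x : F, (e x : QR) = c * (x : QR) := by
    intro x
    have h1 := step1 x
    rw [← htu'] at h1
    calc (e x : QR) = (e x : QR) * (↑tu : QR) * (↑tu⁻¹ : QR) := by
          rw [mul_assoc, Units.mul_inv, mul_one]
      _ = (x : QR) * (e t : QR) * (↑tu⁻¹ : QR) := by rw [h1]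
      _ = c * (x : QR) := by rw [hc]; ring
  obtain ⟨y, hyG, hyu⟩ := hG
  have hcunit : IsUnit c := by
    have hy2 := step2 (e.symm ⟨y, hyG⟩)
    rw [LinearEquiv.apply_symm_apply] at hy2
    have hy3 : y = c * ((e.symm ⟨y, hyG⟩ : F) : QR) := hy2
    exact isUnit_of_mul_isUnit_left (hy3 ▸ hyu)
  refine ⟨c, hcunit, ?_⟩
  ext z
  constructor
  · intro hz
    refine (my_mem_usmul c).2 ⟨((e.symm ⟨z, hz⟩ : F) : QR), (e.symm ⟨z, hz⟩).2, ?_⟩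
    have h2 := step2 (e.symm ⟨z, hz⟩)
    rw [LinearEquiv.apply_symm_apply] at h2
    exact h2.symm
  · intro hz
    obtain ⟨w, hw, rfl⟩ := (my_mem_usmul c).1 hz
    rw [← step2 ⟨w, hw⟩]
    exact (e ⟨w, hw⟩).2

lemma my_exists_nzd [IsLocalRing R] (hdim : ringKrullDim R = 1)
    (hCM : IsCohenMacaulayLocalRing R) :
    ∃ x : R, x ∈ nonZeroDivisors R ∧ x ∈ IsLocalRing.maximalIdeal R := by
  obtain ⟨-, rs, hnu, hreg, hlen⟩ := hCM
  rw [hdim] at hlen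
  have hlen1 : rs.length = 1 := by exact_mod_cast hlen
  obtain ⟨x, rfl⟩ := List.length_eq_one_iff.1 hlen1
  refine ⟨x, ?_, ?_⟩
  · rw [mem_nonZeroDivisors_iff_right]
    intro z hz
    have h0 := hreg.2 0 (by simp) z
    simp only [List.take_zero] at h0
    have hempty : {y | y ∈ ([] : List R)} = (∅ : Set R) := by simp
    rw [hempty, Ideal.span_empty] at h0
    have hmem : ([x].get ⟨0, by simp⟩) * z ∈ (⊥ : Ideal R) := by
      simp only [List.get]
      rw [Ideal.mem_bot, mul_comm]
      exact hz
    simpa using h0 hmem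
  · rw [IsLocalRing.mem_maximalIdeal, mem_nonunits_iff]
    exact hnu x (by simp)

lemma my_prime_eq_max [IsLocalRing R] (hdim : ringKrullDim R = 1) {I : Ideal R}
    (hht : 0 < idealHeight I) {p : Ideal R} (hp : p.IsPrime) (hIp : I ≤ p) :
    p = IsLocalRing.maximalIdeal R := by
  set P : PrimeSpectrum R := ⟨p, hp⟩ with hP
  have h1 : 0 < Order.height P := by
    refine lt_of_lt_of_le hht ?_
    exact iInf₂_le P hIp
  have h2 : ¬ IsMin P := by
    intro h
    rw [← Order.height_eq_zero] at h
    exact h1.ne' h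
  obtain ⟨q, hq⟩ := not_isMin_iff.1 h2
  by_contra hne
  have hpm : p < IsLocalRing.maximalIdeal R :=
    lt_of_le_of_ne (IsLocalRing.le_maximalIdeal hp.ne_top) hne
  set M : PrimeSpectrum R :=
    ⟨IsLocalRing.maximalIdeal R, (IsLocalRing.maximalIdeal.isMaximal R).isPrime⟩ with hM
  have hPM : P < M := (PrimeSpectrum.asIdeal_lt_asIdeal P M).1 hpm
  let C : LTSeries (PrimeSpectrum R) :=
    ((RelSeries.singleton _ M).cons P hPM).cons q (by exact hq)
  have hC := Order.LTSeries.length_le_krullDim C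
  have hl : C.length = 2 := rfl
  rw [hl] at hC
  have hC2 : ((2 : ℕ) : WithBot ℕ∞) ≤ (1 : WithBot ℕ∞) := by
    rw [← hdim]
    exact_mod_cast hC
  norm_num at hC2

end myFrac

/-- Let `R` be a one-dimensional local Cohen–Macaulay ring with canonical
module `ω_R`, and `I` an ideal with `ht I > 0`. If `I^i I^{-n} = a^i I^{-n}` for some
`a ∈ I` and positive integers `i, n`, and `I^(r-1) ≅ ω_R` for some positive `r`,
then `I^(r+n) = a I^(r+n-1)`. -/
theorem stmt0 {R : Type*} [CommRing R] [IsLocalRing R] [IsNoetherianRing R]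
    (hdim : ringKrullDim R = 1) (hCM : IsCohenMacaulayLocalRing R)
    (ω : Submodule R (FractionRing R)) (hω : IsCanonicalIdeal R ω)
    (I : Ideal R) (hht : 0 < idealHeight I)
    (a : R) (ha : a ∈ I) (i n r : ℕ) (hi : 0 < i) (hn : 0 < n) (hr : 0 < r)
    (hyp : toFrac (I ^ i) * invPow I n = toFrac (Ideal.span {a ^ i}) * invPow I n)
    (hiso : Nonempty (↥(toFrac (I ^ (r - 1))) ≃ₗ[R] ↥ω)) :
    I ^ (r + n) = Ideal.span {a} * I ^ (r + n - 1) := by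
  classical
  set QR := FractionRing R
  obtain ⟨i', rfl⟩ : ∃ i', i = i' + 1 := ⟨i - 1, by omega⟩
  -- a nonzerodivisor inside I
  obtain ⟨x, hxnzd, hxm⟩ := my_exists_nzd hdim hCM
  have hmrad : IsLocalRing.maximalIdeal R ≤ I.radical := by
    rw [Ideal.radical_eq_sInf]
    refine le_sInf ?_
    rintro J ⟨hIJ, hJp⟩
    rw [my_prime_eq_max hdim hht hJp hIJ]
  obtain ⟨k, hk⟩ := Ideal.exists_pow_le_of_le_radical_of_fg hmrad (IsNoetherian.noetherian _)
  set b : R := x ^ k with hbdef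
  have hbI : b ∈ I := hk (Ideal.pow_mem_pow hxm k)
  have hbnzd : b ∈ nonZeroDivisors R := pow_mem hxnzd k
  have hβu : IsUnit (algebraMap R QR b) := IsLocalization.map_units QR ⟨b, hbnzd⟩
  -- basic facts about toFrac powers
  have hT : ∀ j k : ℕ, toFrac (I ^ (j + k)) = toFrac (I ^ j) * toFrac (I ^ k) := by
    intro j k; rw [pow_add, toFrac_mul]
  have hTfg : ∀ k : ℕ, (toFrac (I ^ k)).FG := fun k => (IsNoetherian.noetherian (I ^ k)).map _
  have hTunit : ∀ k : ℕ, ∃ z ∈ toFrac (I ^ k), IsUnit z := by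
    intro k
    exact ⟨algebraMap R QR (b ^ k), mem_toFrac (Ideal.pow_mem_pow hbI k),
      by rw [map_pow]; exact hβu.pow k⟩
  set α : QR := algebraMap R QR a with hαdef
  have hαT : α ∈ toFrac (I ^ 1) := by rw [pow_one]; exact mem_toFrac ha
  have hαiT : ∀ j : ℕ, α ^ j ∈ toFrac (I ^ j) := by
    intro j
    rw [hαdef, ← map_pow]
    exact mem_toFrac (Ideal.pow_mem_pow ha j)
  -- hypothesis in smul form
  have hyp' : toFrac (I ^ (i' + 1)) * invPow I n = α ^ (i' + 1) • invPow I n := by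
    rw [hyp, toFrac_span_singleton, map_pow, Submodule.span_singleton_mul]
  -- α is a unit
  have hαu : IsUnit α := by
    have h1 : (algebraMap R QR b) ^ (i' + 1) ∈ toFrac (I ^ (i' + 1)) * invPow I n := by
      have := Submodule.mul_mem_mul
        (mem_toFrac (Ideal.pow_mem_pow hbI (i' + 1))) (one_mem_invPow I n)
      rwa [mul_one, map_pow] at this
    rw [hyp'] at h1
    obtain ⟨v, hv, hveq⟩ := (my_mem_usmul _).1 h1
    have : IsUnit (α ^ (i' + 1) * v) := hveq ▸ (hβu.pow (i' + 1))
    exact isUnit_pow_iff (Nat.succ_ne_zero i') |>.1 (isUnit_of_mul_isUnit_left this)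
  set A : QRˣ := hαu.unit with hAdef
  have hAα : (A : QR) = α := hαu.unit_spec
  -- Step A : invPow I n ≤ α^(i'+1) • invPow I (n + (i'+1))
  have hcancel : (↑(A ^ (i' + 1))⁻¹ : QR) * α ^ (i' + 1) = 1 := by
    rw [← hAα, ← Units.val_pow_eq_pow_val, Units.inv_mul]
  have hcancel' : α ^ (i' + 1) * (↑(A ^ (i' + 1))⁻¹ : QR) = 1 := by
    rw [mul_comm]; exact hcancel
  have stepA : invPow I n ≤ α ^ (i' + 1) • invPow I (n + (i' + 1)) := by
    intro z hz
    refine (my_mem_usmul _).2 ⟨(↑(A ^ (i' + 1))⁻¹ : QR) * z, ?_, ?_⟩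
    · rw [invPow, Submodule.mem_div_iff_forall_mul_mem]
      intro y hy
      rw [hT n (i' + 1)] at hy
      refine Submodule.mul_induction_on hy ?_ ?_
      · intro m hm w hw
        have hwz : w * z ∈ toFrac (I ^ (i' + 1)) * invPow I n := Submodule.mul_mem_mul hw hz
        rw [hyp'] at hwz
        obtain ⟨v, hv, hveq⟩ := (my_mem_usmul _).1 hwz
        have heq : (↑(A ^ (i' + 1))⁻¹ : QR) * z * (m * w)
            = (↑(A ^ (i' + 1))⁻¹ : QR) * ((w * z) * m) := by ring
        have heq2 : (↑(A ^ (i' + 1))⁻¹ : QR) * ((α ^ (i' + 1) * v) * m)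
            = ((↑(A ^ (i' + 1))⁻¹ : QR) * α ^ (i' + 1)) * (v * m) := by ring
        rw [heq, ← hveq, heq2, hcancel, one_mul]
        exact Submodule.mem_div_iff_forall_mul_mem.1 hv m hm
      · intro y1 y2 h1 h2
        have : (↑(A ^ (i' + 1))⁻¹ : QR) * z * (y1 + y2)
            = (↑(A ^ (i' + 1))⁻¹ : QR) * z * y1 + (↑(A ^ (i' + 1))⁻¹ : QR) * z * y2 := by ring
        rw [this]
        exact Submodule.add_mem _ h1 h2
    · rw [← mul_assoc, hcancel', one_mul]
  -- descending chain
  have stepChain : ∀ k : ℕ, α • invPow I (k + 1) ≤ invPow I k := by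
    intro k z hz
    obtain ⟨y, hy, rfl⟩ := (my_mem_usmul _).1 hz
    rw [invPow, Submodule.mem_div_iff_forall_mul_mem]
    intro w hw
    have hαw : α * w ∈ toFrac (I ^ (k + 1)) := by
      have := Submodule.mul_mem_mul hαT hw
      rwa [← hT 1 k, show 1 + k = k + 1 from by omega] at this
    have : α * y * w = y * (α * w) := by ring
    rw [this]
    exact Submodule.mem_div_iff_forall_mul_mem.1 hy _ hαw
  have stepIter : ∀ (j k : ℕ), α ^ j • invPow I (k + j) ≤ invPow I k := by
    intro j
    induction j with
    | zero =>
      intro k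
      rw [pow_zero, one_smul]
      exact le_of_eq (by rw [Nat.add_zero])
    | succ j ih =>
      intro k
      have h1 : α ^ (j + 1) • invPow I (k + (j + 1))
          = α ^ j • (α • invPow I ((k + j) + 1)) := by
        rw [pow_succ, mul_smul]
        rfl
      rw [h1]
      exact le_trans (my_smul_le_smul _ (stepChain (k + j))) (ih k)
  -- E1 : α • invPow I (n+1) = invPow I n
  have E1 : α • invPow I (n + 1) = invPow I n := by
    refine le_antisymm (stepChain n) ?_
    refine stepA.trans ?_
    have hidx : n + (i' + 1) = (n + 1) + i' := by omega
    rw [hidx, pow_succ', mul_smul]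
    exact my_smul_le_smul _ (stepIter i' (n + 1))
  -- canonical module as a scalar multiple of toFrac (I^(r-1))
  have ht0u : IsUnit (algebraMap R QR (b ^ (r - 1))) := by
    rw [map_pow]; exact hβu.pow _
  obtain ⟨c, hcu, hωc⟩ := my_iso_smul (toFrac (I ^ (r - 1))) ω (b ^ (r - 1))
    (mem_toFrac (Ideal.pow_mem_pow hbI (r - 1))) ht0u hω.2.1 hiso.some
  set cU : QRˣ := hcu.unit with hcUdef
  have hcc : (cU : QR) = c := hcu.unit_spec
  rw [← hcc] at hωc
  -- duality facts
  have hone_fg : (1 : Submodule R QR).FG := ⟨{1}, by rw [Finset.coe_singleton, Submodule.one_eq_span]⟩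
  have hone_unit : ∃ z ∈ (1 : Submodule R QR), IsUnit z :=
    ⟨1, Submodule.one_le.1 le_rfl, isUnit_one⟩
  have hFF : toFrac (I ^ (r - 1)) / toFrac (I ^ (r - 1)) = 1 := by
    have h1 := hω.2.2 1 hone_fg hone_unit
    rw [my_div_one] at h1
    rw [hωc, my_smul_div cU, my_div_smul cU, my_usmul_cancel] at h1
    exact h1
  have hDk : ∀ k : ℕ, ω / toFrac (I ^ (r - 1 + k)) = (cU : QR) • invPow I k := by
    intro k
    rw [hT (r - 1) k, hωc, my_smul_div cU, my_div_mul, hFF, invPow]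
  have hDD : ∀ k : ℕ, toFrac (I ^ (r - 1 + k)) = (↑cU⁻¹ : QR) • (ω / invPow I k) := by
    intro k
    have h1 := hω.2.2 (toFrac (I ^ (r - 1 + k))) (hTfg _) (hTunit _)
    rw [hDk k, my_div_smul cU] at h1
    exact h1.symm
  -- conclude
  have hNN : invPow I (n + 1) = (↑A⁻¹ : QR) • invPow I n := by
    rw [← E1, ← hAα, my_usmul_cancel']
  have hωdiv : ω / invPow I (n + 1) = α • (ω / invPow I n) := by
    rw [hNN, my_div_smul A⁻¹, inv_inv, hAα]
  have hfin : toFrac (I ^ (r - 1 + (n + 1))) = α • toFrac (I ^ (r - 1 + n)) := by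
    rw [hDD (n + 1), hDD n, hωdiv, smul_comm]
  have hidx1 : r - 1 + (n + 1) = r + n := by omega
  have hidx2 : r - 1 + n = r + n - 1 := by omega
  rw [hidx1, hidx2] at hfin
  apply toFrac_inj
  rw [toFrac_mul, toFrac_span_singleton, Submodule.span_singleton_mul, hfin]
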